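/- Let q > 1 and define c_n by ∏_{k=1}^∞ (1 + k^{-q} z^k) = Σ_{n=0}^∞ c_n z^n for |z| < 1. Then c_n ~ W(q) n^{-q} as n → ∞, where W(q) = ∏_{k=1}^∞ (1 + k^{-q}). -/

import Mathlib

set_option linter.unusedSectionVars false
set_option linter.unusedVariables false
set_option maxHeartbeats 1000000
open Polynomial Filter Finset Topology

namespace Stmt7


noncomputable def al (q : ℝ) (k : ℕ) : ℝ := (k : ℝ) ^ (-q)

lemma al_nonneg (q : ℝ) (k : ℕ) : 0 ≤ al q k := Real.rpow_nonneg (Nat.cast_nonneg k) _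

lemma al_pos (q : ℝ) {k : ℕ} (hk : 1 ≤ k) : 0 < al q k :=
  Real.rpow_pos_of_pos (by exact_mod_cast hk) _

noncomputable def pp (q : ℝ) (m : ℕ) : Polynomial ℝ :=
  ∏ k ∈ Finset.range m, (1 + Polynomial.C (al q (k+1)) * Polynomial.X ^ (k+1))

noncomputable def bc (q : ℝ) (m n : ℕ) : ℝ := (pp q m).coeff n

noncomputable def b (q : ℝ) (n : ℕ) : ℝ := bc q n n

lemma bc_zero (q : ℝ) (n : ℕ) : bc q 0 n = if n = 0 then 1 else 0 := by
  simp [bc, pp, Polynomial.coeff_one, eq_comm]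

lemma bc_succ (q : ℝ) (m n : ℕ) :
    bc q (m+1) n = bc q m n + al q (m+1) * (if m+1 ≤ n then bc q m (n-(m+1)) else 0) := by
  have h : pp q (m+1) = pp q m + Polynomial.C (al q (m+1)) * (pp q m * Polynomial.X ^ (m+1)) := by
    rw [pp, Finset.prod_range_succ, ← pp]
    ring
  show (pp q (m+1)).coeff n = _
  rw [h, Polynomial.coeff_add, Polynomial.coeff_C_mul, Polynomial.coeff_mul_X_pow']
  split <;> simp [bc]

lemma bc_nonneg (q : ℝ) (m n : ℕ) : 0 ≤ bc q m n := by
  induction m generalizing n with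
  | zero => rw [bc_zero]; split <;> norm_num
  | succ m ih =>
    rw [bc_succ]
    have h0 : 0 ≤ (if m+1 ≤ n then bc q m (n-(m+1)) else 0) := by
      split
      · exact ih _
      · exact le_refl 0
    have := ih n
    nlinarith [al_nonneg q (m+1)]

lemma bc_mono (q : ℝ) {m m' : ℕ} (h : m ≤ m') (n : ℕ) : bc q m n ≤ bc q m' n := by
  induction m' with
  | zero => simp_all
  | succ m' ih =>
    rcases Nat.eq_or_lt_of_le h with rfl | h'
    · exact le_refl _
    · refine (ih (Nat.lt_succ_iff.mp h')).trans ?_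
      rw [bc_succ]
      have : 0 ≤ (if m'+1 ≤ n then bc q m' (n-(m'+1)) else 0) := by
        split
        · exact bc_nonneg _ _ _
        · exact le_refl 0
      nlinarith [al_nonneg q (m'+1)]

lemma bc_stab (q : ℝ) {m n : ℕ} (h : n ≤ m) : bc q m n = b q n := by
  induction m with
  | zero =>
    have : n = 0 := Nat.le_zero.mp h
    subst this; rfl
  | succ m ih =>
    rcases Nat.eq_or_lt_of_le h with rfl | h'
    · rfl
    · have hn : n ≤ m := Nat.lt_succ_iff.mp h'
      rw [bc_succ, if_neg (by omega), mul_zero, add_zero, ih hn]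

lemma bc_le_b (q : ℝ) (m n : ℕ) : bc q m n ≤ b q n := by
  rcases le_or_gt n m with h | h
  · exact (bc_stab q h).le
  · exact (bc_mono q h.le n).trans_eq (bc_stab q (le_refl n))

lemma b_nonneg (q : ℝ) (n : ℕ) : 0 ≤ b q n := bc_nonneg q n n

lemma b_zero (q : ℝ) : b q 0 = 1 := by simp [b, bc_zero]

/-- degree bound -/
lemma bc_eq_zero (q : ℝ) {m n : ℕ} (h : ∑ k ∈ Finset.range m, (k+1) < n) : bc q m n = 0 := by
  apply Polynomial.coeff_eq_zero_of_natDegree_lt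
  calc (pp q m).natDegree ≤ ∑ k ∈ Finset.range m, (1 + Polynomial.C (al q (k+1)) * Polynomial.X ^ (k+1)).natDegree :=
        by unfold pp; exact Polynomial.natDegree_prod_le _ _
    _ ≤ ∑ k ∈ Finset.range m, (k+1) := by
        apply Finset.sum_le_sum
        intro k _
        refine (Polynomial.natDegree_add_le _ _).trans ?_
        simp only [Polynomial.natDegree_one, max_le_iff]
        refine ⟨by omega, (Polynomial.natDegree_C_mul_le _ _).trans (by simp)⟩
    _ < n := h

/-- key identity -/
lemma b_eq_sum (q : ℝ) {n : ℕ} (hn : 1 ≤ n) :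
    b q n = ∑ k ∈ Finset.range n, al q (k+1) * bc q k (n-(k+1)) := by
  have h1 : ∀ k ∈ Finset.range n, bc q (k+1) n - bc q k n = al q (k+1) * bc q k (n-(k+1)) := by
    intro k hk
    rw [bc_succ, if_pos (Nat.succ_le_of_lt (Finset.mem_range.mp hk))]
    ring
  calc b q n = bc q n n - bc q 0 n := by
        rw [bc_zero, if_neg (by omega), sub_zero]; rfl
    _ = ∑ k ∈ Finset.range n, (bc q (k+1) n - bc q k n) := (Finset.sum_range_sub (fun k => bc q k n) n).symm
    _ = _ := Finset.sum_congr rfl h1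


section eval
variable {A : Type*} [NormedCommRing A] [NormedAlgebra ℝ A] [NormOneClass A] [CompleteSpace A]

lemma hasSum_pp (q : ℝ) (m : ℕ) (z : A) :
    HasSum (fun n => algebraMap ℝ A (bc q m n) * z ^ n) (Polynomial.aeval z (pp q m)) := by
  rw [Polynomial.aeval_eq_sum_range' (Nat.lt_succ_self (pp q m).natDegree)]
  have h0 : ∀ n ∉ Finset.range ((pp q m).natDegree + 1),
      algebraMap ℝ A (bc q m n) * z ^ n = 0 := by
    intro n hn
    have : bc q m n = 0 := Polynomial.coeff_eq_zero_of_natDegree_lt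
      (by simpa [Nat.lt_succ_iff] using hn)
    simp [this]
  have h2 : ∑ i ∈ Finset.range ((pp q m).natDegree + 1), (pp q m).coeff i • z ^ i
      = ∑ i ∈ Finset.range ((pp q m).natDegree + 1), algebraMap ℝ A (bc q m i) * z ^ i :=
    Finset.sum_congr rfl fun i _ => Algebra.smul_def _ _
  rw [h2]
  exact hasSum_sum_of_ne_finset_zero h0

lemma summable_al {q : ℝ} (hq : 1 < q) : Summable (fun k : ℕ => al q (k+1)) := by
  have h : Summable (fun n : ℕ => (n : ℝ) ^ (-q)) := Real.summable_nat_rpow.mpr (by linarith)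
  have := (summable_nat_add_iff (f := fun n : ℕ => (n : ℝ) ^ (-q)) 1).mpr h
  refine this.congr fun k => ?_
  simp [al]

lemma summable_b {q : ℝ} (hq : 1 < q) : Summable (b q) := by
  apply summable_of_sum_range_le (b_nonneg q)
  intro N
  have h1 : ∑ n ∈ Finset.range N, b q n = ∑ n ∈ Finset.range N, bc q N n :=
    Finset.sum_congr rfl fun n hn => (bc_stab q (Finset.mem_range.mp hn).le).symm
  set M := max N ((pp q N).natDegree + 1) with hM
  have h2 : ∑ n ∈ Finset.range N, bc q N n ≤ ∑ n ∈ Finset.range M, bc q N n := by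
    apply Finset.sum_le_sum_of_subset_of_nonneg
    · exact Finset.range_subset_range.mpr (le_max_left _ _)
    · intro i _ _; exact bc_nonneg q N i
  have h3 : ∑ n ∈ Finset.range M, bc q N n = Polynomial.eval 1 (pp q N) := by
    rw [Polynomial.eval_eq_sum_range' (n := M) (lt_of_lt_of_le (Nat.lt_succ_self _)
      (le_max_right _ _)) 1]
    simp [bc]
  have h4 : Polynomial.eval 1 (pp q N) = ∏ k ∈ Finset.range N, (1 + al q (k+1)) := by
    rw [pp, Polynomial.eval_prod]
    refine Finset.prod_congr rfl fun k _ => ?_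
    simp
  have h5 : ∏ k ∈ Finset.range N, (1 + al q (k+1)) ≤ Real.exp (∑' k : ℕ, al q (k+1)) := by
    have e1 : ∏ k ∈ Finset.range N, (1 + al q (k+1))
        ≤ ∏ k ∈ Finset.range N, Real.exp (al q (k+1)) := by
      apply Finset.prod_le_prod
      · intro k _; have := al_nonneg q (k+1); linarith
      · intro k _; linarith [Real.add_one_le_exp (al q (k+1))]
    have e2 : ∏ k ∈ Finset.range N, Real.exp (al q (k+1))
        = Real.exp (∑ k ∈ Finset.range N, al q (k+1)) := (Real.exp_sum _ _).symm
    have e3 : Real.exp (∑ k ∈ Finset.range N, al q (k+1)) ≤ Real.exp (∑' k : ℕ, al q (k+1)) :=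
      Real.exp_le_exp.mpr ((summable_al hq).sum_le_tsum _ (fun k _ => al_nonneg q (k+1)))
    linarith
  calc ∑ n ∈ Finset.range N, b q n = ∑ n ∈ Finset.range N, bc q N n := h1
    _ ≤ ∑ n ∈ Finset.range M, bc q N n := h2
    _ = Polynomial.eval 1 (pp q N) := h3
    _ = ∏ k ∈ Finset.range N, (1 + al q (k+1)) := h4
    _ ≤ Real.exp (∑' k : ℕ, al q (k+1)) := h5

lemma summable_series {q : ℝ} (hq : 1 < q) {z : A} (hz : ‖z‖ ≤ 1) :
    Summable (fun n : ℕ => algebraMap ℝ A (b q n) * z ^ n) := by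
  apply Summable.of_norm_bounded (summable_b hq)
  intro n
  calc ‖algebraMap ℝ A (b q n) * z ^ n‖ ≤ ‖algebraMap ℝ A (b q n)‖ * ‖z ^ n‖ := norm_mul_le _ _
    _ ≤ |b q n| * 1 := by
        refine mul_le_mul ?_ ?_ (norm_nonneg _) (abs_nonneg _)
        · rw [norm_algebraMap', Real.norm_eq_abs]
        · exact (norm_pow_le z n).trans (pow_le_one₀ (norm_nonneg z) hz)
    _ = b q n := by rw [mul_one, abs_of_nonneg (b_nonneg q n)]

lemma tendsto_aeval {q : ℝ} (hq : 1 < q) {z : A} (hz : ‖z‖ ≤ 1) :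
    Tendsto (fun m => Polynomial.aeval z (pp q m)) atTop
      (𝓝 (∑' n : ℕ, algebraMap ℝ A (b q n) * z ^ n)) := by
  have h := tendsto_tsum_of_dominated_convergence
    (f := fun (m : ℕ) (n : ℕ) => algebraMap ℝ A (bc q m n) * z ^ n)
    (g := fun n => algebraMap ℝ A (b q n) * z ^ n) (bound := b q) (summable_b hq)
    (fun n => tendsto_atTop_of_eventually_const (i₀ := n)
      (fun m hm => by show algebraMap ℝ A (bc q m n) * z ^ n = _; rw [bc_stab q hm]))
    (Filter.Eventually.of_forall fun m => fun n => by
      calc ‖algebraMap ℝ A (bc q m n) * z ^ n‖ ≤ ‖algebraMap ℝ A (bc q m n)‖ * ‖z ^ n‖ :=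
            norm_mul_le _ _
        _ ≤ |bc q m n| * 1 := by
            refine mul_le_mul (by rw [norm_algebraMap', Real.norm_eq_abs]) ?_ (norm_nonneg _)
              (abs_nonneg _)
            exact (norm_pow_le z n).trans (pow_le_one₀ (norm_nonneg z) hz)
        _ ≤ b q n := by rw [mul_one, abs_of_nonneg (bc_nonneg q m n)]; exact bc_le_b q m n)
  refine h.congr fun m => ?_
  exact (hasSum_pp q m z).tsum_eq

end eval

lemma al_le_one {q : ℝ} (hq : 1 < q) (k : ℕ) : al q (k+1) ≤ 1 := by
  apply Real.rpow_le_one_of_one_le_of_nonpos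
  · exact_mod_cast Nat.one_le_iff_ne_zero.mpr (Nat.succ_ne_zero k)
  · linarith

lemma multipliable_complex {q : ℝ} (hq : 1 < q) {z : ℂ} (hz : ‖z‖ < 1) :
    Multipliable (fun k : ℕ => 1 + (al q (k+1) : ℂ) * z ^ (k+1)) := by
  have hw : ∀ k : ℕ, ‖(al q (k+1) : ℂ) * z ^ (k+1)‖ ≤ ‖z‖ ^ (k+1) := by
    intro k
    rw [norm_mul, norm_pow, Complex.norm_real, Real.norm_eq_abs,
      abs_of_nonneg (al_nonneg q (k+1))]
    calc al q (k+1) * ‖z‖^(k+1) ≤ 1 * ‖z‖^(k+1) := by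
          apply mul_le_mul_of_nonneg_right (al_le_one hq k) (by positivity)
      _ = ‖z‖^(k+1) := one_mul _
  have hne : ∀ (_ : Unit) (k : ℕ), (fun k (_ : Unit) => 1 + (al q (k+1) : ℂ) * z ^ (k+1)) k () ≠ 0 := by
    intro _ k
    intro h
    have h2 : (al q (k+1) : ℂ) * z ^ (k+1) = -1 := by linear_combination h
    have := hw k
    rw [h2] at this
    simp only [norm_neg, norm_one] at this
    have h3 : ‖z‖^(k+1) ≤ ‖z‖^1 := pow_le_pow_of_le_one (norm_nonneg z) hz.le (by omega)
    rw [pow_one] at h3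
    linarith
  have hlog : Summable (fun k : ℕ => Complex.log (1 + (al q (k+1) : ℂ) * z ^ (k+1))) := by
    have hzpow : Tendsto (fun k : ℕ => ‖z‖ ^ (k+1)) atTop (𝓝 0) :=
      (tendsto_pow_atTop_nhds_zero_of_lt_one (norm_nonneg z) hz).comp (tendsto_add_atTop_nat 1)
    have hev : ∀ᶠ k : ℕ in cofinite, ‖Complex.log (1 + (al q (k+1) : ℂ) * z ^ (k+1))‖
        ≤ 3/2 * ‖z‖ ^ (k+1) := by
      rw [Nat.cofinite_eq_atTop]
      filter_upwards [hzpow.eventually_le_const (show (0:ℝ) < 1/2 by norm_num)] with k hk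
      calc ‖Complex.log (1 + (al q (k+1) : ℂ) * z ^ (k+1))‖
          ≤ 3/2 * ‖(al q (k+1) : ℂ) * z ^ (k+1)‖ :=
            Complex.norm_log_one_add_half_le_self ((hw k).trans hk)
        _ ≤ 3/2 * ‖z‖^(k+1) := by nlinarith [hw k]
    refine Summable.of_norm_bounded_eventually ?_ hev
    have : Summable (fun k : ℕ => ‖z‖ ^ k) := summable_geometric_of_lt_one (norm_nonneg z) hz
    exact ((this.mul_left (3/2 * ‖z‖)).congr (fun k => by ring))
  exact Complex.multipliable_of_summable_log hlog

lemma multipliable_real {q : ℝ} (hq : 1 < q) :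
    Multipliable (fun k : ℕ => 1 + al q (k+1)) := by
  have hpos : ∀ (_ : Unit) (k : ℕ), 0 < (fun k (_ : Unit) => 1 + al q (k+1)) k () := by
    intro _ k
    have := al_nonneg q (k+1)
    simp only
    linarith
  have hlog : Summable (fun k : ℕ => Real.log (1 + al q (k+1))) := by
    apply Summable.of_nonneg_of_le (fun k => Real.log_nonneg (by linarith [al_nonneg q (k+1)]))
      (fun k => ?_) (summable_al hq)
    have h := Real.log_le_sub_one_of_pos (show (0:ℝ) < 1 + al q (k+1) by linarith [al_nonneg q (k+1)])
    linarith
  exact Real.multipliable_of_summable_log (fun k => hpos () k) hlog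

lemma aeval_pp_eq {A : Type} [CommRing A] [Algebra ℝ A] (q : ℝ) (m : ℕ) (z : A) :
    Polynomial.aeval z (pp q m) = ∏ k ∈ Finset.range m, (1 + algebraMap ℝ A (al q (k+1)) * z ^ (k+1)) := by
  rw [pp, map_prod]
  refine Finset.prod_congr rfl fun k _ => ?_
  simp [Algebra.smul_def]

/-- the complex power series identity -/
lemma hasSum_tprod_complex {q : ℝ} (hq : 1 < q) {z : ℂ} (hz : ‖z‖ < 1) :
    HasSum (fun n : ℕ => (b q n : ℂ) * z ^ n)
      (∏' k : ℕ, (1 + (al q (k+1) : ℂ) * z ^ (k+1))) := by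
  have h1 := (multipliable_complex hq hz).hasProd.tendsto_prod_nat
  have h2 : (fun m => ∏ k ∈ Finset.range m, (1 + (al q (k+1) : ℂ) * z ^ (k+1)))
      = fun m => Polynomial.aeval z (pp q m) := by
    funext m
    rw [aeval_pp_eq]
    refine Finset.prod_congr rfl fun k _ => ?_
    norm_num [Algebra.algebraMap_eq_smul_one, Complex.real_smul]
  rw [h2] at h1
  have h3 := tendsto_aeval hq (A := ℂ) hz.le
  have h4 := tendsto_nhds_unique h1 h3
  rw [h4]
  have := (summable_series hq (A := ℂ) hz.le).hasSum
  refine this.congr fun n => ?_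
  norm_num [Algebra.algebraMap_eq_smul_one, Complex.real_smul]

/-- the real product identity : W = ∑ b -/
lemma tprod_real_eq {q : ℝ} (hq : 1 < q) :
    (∏' k : ℕ, (1 + al q (k+1))) = ∑' n : ℕ, b q n := by
  have h1 := (multipliable_real hq).hasProd.tendsto_prod_nat
  have h2 : (fun m => ∏ k ∈ Finset.range m, (1 + al q (k+1)))
      = fun m => Polynomial.aeval (1:ℝ) (pp q m) := by
    funext m
    rw [aeval_pp_eq]
    simp
  rw [h2] at h1
  have h3 := tendsto_aeval hq (A := ℝ) (z := 1) (by norm_num)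
  have h4 := tendsto_nhds_unique h1 h3
  rw [h4]
  simp [Algebra.algebraMap_self]


lemma coeff_unique {e : ℕ → ℂ}
    (he : ∀ z : ℂ, ‖z‖ < 1 → HasSum (fun n : ℕ => e n * z ^ n) 0) :
    ∀ n, e n = 0 := by
  -- growth bound on e
  have hhalf : ‖(2⁻¹ : ℂ)‖ < 1 := by
    rw [norm_inv]
    simp only [Complex.norm_ofNat]
    norm_num
  obtain ⟨M, hM⟩ : ∃ M : ℝ, ∀ n : ℕ, ‖e n * (2⁻¹ : ℂ) ^ n‖ ≤ M := by
    have h1 := (he _ hhalf).summable.tendsto_atTop_zero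
    have h2 : Tendsto (fun n => ‖e n * (2⁻¹ : ℂ) ^ n‖) atTop (𝓝 0) := by
      simpa using h1.norm
    obtain ⟨M, hM⟩ := h2.bddAbove_range
    exact ⟨M, fun n => hM (Set.mem_range_self n)⟩
  have hebd : ∀ n : ℕ, ‖e n‖ ≤ M * 2 ^ n := by
    intro n
    have h := hM n
    rw [norm_mul, norm_pow, norm_inv] at h
    simp only [Complex.norm_ofNat] at h
    have h2 : (0:ℝ) < (2⁻¹)^n := by positivity
    calc ‖e n‖ = ‖e n‖ * (2⁻¹)^n * 2^n := by
          have h3 : ((2:ℝ)⁻¹)^n * 2^n = 1 := by rw [← mul_pow]; norm_num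
          rw [mul_assoc, h3, mul_one]
      _ ≤ M * 2^n := mul_le_mul_of_nonneg_right h (by positivity)
  intro N
  induction N using Nat.strong_induction_on with
  | _ N ih =>
  set z : ℕ → ℂ := fun j => (4⁻¹ : ℂ) ^ (j+1) with hzdef
  have hznorm : ∀ j, ‖z j‖ = (4⁻¹ : ℝ) ^ (j+1) := by
    intro j
    rw [hzdef]
    simp only [norm_pow, norm_inv, Complex.norm_ofNat]
  have hzlt : ∀ j, ‖z j‖ < 1 := by
    intro j
    rw [hznorm]
    apply pow_lt_one₀ (by norm_num) (by norm_num) (by omega)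
  have hz0 : ∀ j, z j ≠ 0 := fun j => pow_ne_zero _ (by norm_num)
  have hzle : ∀ j, ‖z j‖ ≤ 4⁻¹ := by
    intro j
    rw [hznorm]
    calc ((4:ℝ)⁻¹) ^ (j+1) ≤ (4⁻¹)^1 := pow_le_pow_of_le_one (by norm_num) (by norm_num) (by omega)
      _ = 4⁻¹ := pow_one _
  -- the shifted sums vanish
  have htsum : ∀ j, ∑' n : ℕ, e (n + N) * z j ^ n = 0 := by
    intro j
    have h0 := he (z j) (hzlt j)
    have hsum0 : ∑ i ∈ Finset.range N, e i * z j ^ i = 0 :=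
      Finset.sum_eq_zero fun i hi => by rw [ih i (Finset.mem_range.mp hi), zero_mul]
    have hshift : HasSum (fun n => e (n + N) * z j ^ (n + N)) 0 := by
      rw [hasSum_nat_add_iff (f := fun n => e n * z j ^ n) N, hsum0, add_zero]
      exact h0
    have hdiv : HasSum (fun n => e (n + N) * z j ^ n) 0 := by
      have h1 := hshift.mul_right ((z j ^ N)⁻¹)
      rw [zero_mul] at h1
      refine h1.congr_fun fun n => ?_
      have hzz : z j ^ N ≠ 0 := pow_ne_zero N (hz0 j)
      field_simp [pow_add]
      ring
    exact hdiv.tsum_eq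
  -- Tannery
  have htan := tendsto_tsum_of_dominated_convergence
    (𝓕 := atTop) (f := fun (j : ℕ) (n : ℕ) => e (n + N) * z j ^ n)
    (g := fun n => if n = 0 then e N else 0) (bound := fun n => (M * 2 ^ N) * (2⁻¹ : ℝ) ^ n)
    (((summable_geometric_of_lt_one (by norm_num) (by norm_num)).mul_left _))
    ?_ ?_
  · have h1 : Tendsto (fun j : ℕ => (0:ℂ)) atTop (𝓝 (∑' n : ℕ, if n = 0 then e N else 0)) := by
      refine htan.congr fun j => ?_
      rw [htsum j]
    have h2 := tendsto_nhds_unique h1 tendsto_const_nhds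
    have h3 : ∑' n : ℕ, (if n = 0 then e N else 0) = e N := tsum_ite_eq 0 (fun _ => e N)
    rw [h3] at h2
    exact h2
  · intro n
    rcases Nat.eq_zero_or_pos n with rfl | hn
    · simp
    · simp only [if_neg hn.ne']
      have hMnn : (0:ℝ) ≤ M := by
        have := norm_nonneg (e 0)
        nlinarith [hebd 0]
      refine squeeze_zero_norm (a := fun j : ℕ => (M * 2 ^ (n + N)) * (4⁻¹:ℝ) ^ (j+1))
        (fun j => ?_) ?_
      · rw [norm_mul, norm_pow, hznorm]
        calc ‖e (n + N)‖ * ((4⁻¹:ℝ) ^ (j+1)) ^ n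
            ≤ (M * 2 ^ (n + N)) * ((4⁻¹:ℝ) ^ (j+1)) ^ n := by
              apply mul_le_mul_of_nonneg_right (hebd _) (by positivity)
          _ ≤ (M * 2 ^ (n + N)) * (4⁻¹:ℝ) ^ (j+1) := by
              apply mul_le_mul_of_nonneg_left _ (by positivity)
              calc ((4⁻¹:ℝ) ^ (j+1)) ^ n ≤ ((4⁻¹:ℝ) ^ (j+1)) ^ 1 :=
                  pow_le_pow_of_le_one (by positivity)
                    (pow_le_one₀ (by norm_num) (by norm_num)) (by omega)
                _ = (4⁻¹:ℝ) ^ (j+1) := pow_one _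
      · have ht : Tendsto (fun j : ℕ => (4⁻¹:ℝ) ^ (j+1)) atTop (𝓝 0) :=
          (tendsto_pow_atTop_nhds_zero_of_lt_one (by norm_num) (by norm_num)).comp
            (tendsto_add_atTop_nat 1)
        simpa using ht.const_mul (M * 2 ^ (n + N))
  · refine Filter.Eventually.of_forall fun j => fun n => ?_
    rw [norm_mul, norm_pow, hznorm]
    have hMnn : (0:ℝ) ≤ M := by
      have := norm_nonneg (e 0)
      nlinarith [hebd 0]
    have h4 : ((4⁻¹:ℝ) ^ (j+1)) ^ n ≤ (4⁻¹:ℝ) ^ n := by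
      apply pow_le_pow_left₀ (by positivity)
      calc (4⁻¹:ℝ) ^ (j+1) ≤ (4⁻¹:ℝ)^1 :=
          pow_le_pow_of_le_one (by norm_num) (by norm_num) (by omega)
        _ = 4⁻¹ := pow_one _
    have h5 : (2:ℝ)^n * (4⁻¹:ℝ)^n = (2⁻¹:ℝ)^n := by rw [← mul_pow]; norm_num
    calc ‖e (n + N)‖ * ((4⁻¹:ℝ) ^ (j+1)) ^ n
        ≤ (M * 2 ^ (n + N)) * ((4⁻¹:ℝ)) ^ n :=
          mul_le_mul (hebd _) h4 (by positivity) (by positivity)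
      _ = (M * 2 ^ N) * ((2:ℝ)^n * (4⁻¹:ℝ)^n) := by rw [pow_add]; ring
      _ = (M * 2 ^ N) * (2⁻¹:ℝ) ^ n := by rw [h5]

/-! ### S and invS -/

def S (m : ℕ) : ℕ := ∑ k ∈ Finset.range m, (k+1)

lemma S_mono : Monotone S := by
  intro a b hab
  exact Finset.sum_le_sum_of_subset (Finset.range_subset_range.mpr hab)

lemma le_S_self (n : ℕ) : n ≤ S n := by
  induction n with
  | zero => simp [S]
  | succ n ih => rw [S, Finset.sum_range_succ, ← S]; omega

lemma exists_le_S (n : ℕ) : ∃ m, n ≤ S m := ⟨n, le_S_self n⟩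

noncomputable def invS (n : ℕ) : ℕ := Nat.find (exists_le_S n)

lemma le_S_invS (n : ℕ) : n ≤ S (invS n) := Nat.find_spec (exists_le_S n)

lemma invS_le {n m : ℕ} (h : n ≤ S m) : invS n ≤ m := Nat.find_min' (exists_le_S n) h

lemma invS_pos {n : ℕ} (hn : 1 ≤ n) : 1 ≤ invS n := by
  by_contra h
  have h0 : invS n = 0 := by omega
  have := le_S_invS n
  rw [h0] at this
  simp [S] at this
  omega

lemma tendsto_invS : Tendsto invS atTop atTop := by
  rw [tendsto_atTop_atTop]
  intro M
  refine ⟨S M + 1, fun n hn => ?_⟩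
  by_contra h
  push_neg at h
  have h2 : S (invS n) ≤ S M := S_mono (by omega)
  have := le_S_invS n
  omega

lemma bc_support (q : ℝ) {k n : ℕ} (h : bc q k n ≠ 0) : n ≤ S k := by
  by_contra h2
  exact h (bc_eq_zero q (by rw [← S]; omega))

/-! ### rpow helpers -/

lemma rpow_mul_rpow_neg {q : ℝ} {n : ℕ} (hn : 1 ≤ n) : (n:ℝ)^q * (n:ℝ)^(-q) = 1 := by
  have hnp : (0:ℝ) < (n:ℝ) := by exact_mod_cast hn
  rw [← Real.rpow_add hnp]
  simp

lemma rpow_half_bound {q : ℝ} (hq : 1 < q) {j n : ℕ} (hj : 1 ≤ j) (hn : 1 ≤ n)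
    (h2 : n ≤ 2 * j) : (j:ℝ)^(-q) ≤ (2:ℝ)^q * (n:ℝ)^(-q) := by
  have hjp : (0:ℝ) < j := by exact_mod_cast hj
  have hnp : (0:ℝ) < n := by exact_mod_cast hn
  have h1 : ((2*j : ℕ):ℝ)^(-q) ≤ (n:ℝ)^(-q) :=
    Real.rpow_le_rpow_of_nonpos hnp (by exact_mod_cast h2) (by linarith)
  have h3 : ((2*j : ℕ):ℝ)^(-q) = (2:ℝ)^(-q) * (j:ℝ)^(-q) := by
    push_cast
    rw [Real.mul_rpow (by norm_num) (le_of_lt hjp)]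
  rw [h3] at h1
  have h4 : (0:ℝ) < (2:ℝ)^q := Real.rpow_pos_of_pos (by norm_num) _
  have h5 : (2:ℝ)^q * (2:ℝ)^(-q) = 1 := by
    rw [← Real.rpow_add (by norm_num)]
    simp
  calc (j:ℝ)^(-q) = ((2:ℝ)^q * (2:ℝ)^(-q)) * (j:ℝ)^(-q) := by rw [h5, one_mul]
    _ = (2:ℝ)^q * ((2:ℝ)^(-q) * (j:ℝ)^(-q)) := by ring
    _ ≤ (2:ℝ)^q * (n:ℝ)^(-q) := mul_le_mul_of_nonneg_left h1 h4.le

/-! ### tails -/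

noncomputable def Ttail (q : ℝ) (M : ℕ) : ℝ := ∑' j : ℕ, al q (j + M)

lemma summable_al_shift {q : ℝ} (hq : 1 < q) (M : ℕ) : Summable (fun j : ℕ => al q (j + M)) := by
  have h0 : Summable (al q) := by
    have := (summable_nat_add_iff (f := al q) 1).mp ?_
    · exact this
    · exact (summable_al hq).congr fun k => rfl
  exact (summable_nat_add_iff M).mpr h0

lemma Ttail_nonneg {q : ℝ} (M : ℕ) : 0 ≤ Ttail q M :=
  tsum_nonneg fun j => al_nonneg q _

lemma tendsto_Ttail {q : ℝ} (hq : 1 < q) : Tendsto (Ttail q) atTop (𝓝 0) :=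
  tendsto_sum_nat_add (al q)

/-! ### small/big part bounds -/

lemma smallsum {q : ℝ} (hq : 1 < q) {K : ℝ} (hK0 : 0 ≤ K) {n : ℕ} (hn : 1 ≤ n)
    (hKb : ∀ j, 1 ≤ j → j < n → b q j ≤ K * (j:ℝ)^(-q)) :
    ∑ k ∈ (Finset.range n).filter (fun k => 2*(k+1) < n), al q (k+1) * bc q k (n-(k+1))
      ≤ K * (2:ℝ)^q * (n:ℝ)^(-q) * Ttail q (invS n) := by
  set C : ℝ := K * (2:ℝ)^q * (n:ℝ)^(-q) with hC
  have hCpos : 0 ≤ C := by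
    have : (0:ℝ) < (2:ℝ)^q := Real.rpow_pos_of_pos (by norm_num) _
    have : (0:ℝ) ≤ (n:ℝ)^(-q) := Real.rpow_nonneg (Nat.cast_nonneg n) _
    positivity
  set g : ℕ → ℝ := fun k => if invS n ≤ k+1 then al q (k+1) else 0 with hg
  have hgnn : ∀ k, 0 ≤ g k := by
    intro k; rw [hg]; dsimp only; split
    · exact al_nonneg q _
    · exact le_refl 0
  have hsumg : Summable g := by
    apply Summable.of_nonneg_of_le hgnn (fun k => ?_) (summable_al hq)
    rw [hg]; dsimp only; split
    · exact le_refl _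
    · exact al_nonneg q _
  have claim1 : ∀ k ∈ (Finset.range n).filter (fun k => 2*(k+1) < n),
      al q (k+1) * bc q k (n-(k+1)) ≤ g k * C := by
    intro k hk
    rw [Finset.mem_filter, Finset.mem_range] at hk
    obtain ⟨hkn, hsmall⟩ := hk
    by_cases hbc : bc q k (n-(k+1)) = 0
    · rw [hbc, mul_zero]
      exact mul_nonneg (hgnn k) hCpos
    · have hsupp := bc_support q hbc
      have hSk1 : n ≤ S (k+1) := by
        rw [S, Finset.sum_range_succ, ← S]; omega
      have hinv : invS n ≤ k+1 := invS_le hSk1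
      have hgk : g k = al q (k+1) := by rw [hg]; exact if_pos hinv
      have hj1 : 1 ≤ n - (k+1) := by omega
      have hjn : n - (k+1) < n := by omega
      have hb1 : bc q k (n-(k+1)) ≤ K * ((n-(k+1):ℕ):ℝ)^(-q) :=
        (bc_le_b q _ _).trans (hKb _ hj1 hjn)
      have hb2 : ((n-(k+1):ℕ):ℝ)^(-q) ≤ (2:ℝ)^q * (n:ℝ)^(-q) :=
        rpow_half_bound hq hj1 hn (by omega)
      calc al q (k+1) * bc q k (n-(k+1))
          ≤ al q (k+1) * (K * ((2:ℝ)^q * (n:ℝ)^(-q))) := by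
            apply mul_le_mul_of_nonneg_left _ (al_nonneg q _)
            calc bc q k (n-(k+1)) ≤ K * ((n-(k+1):ℕ):ℝ)^(-q) := hb1
              _ ≤ K * ((2:ℝ)^q * (n:ℝ)^(-q)) := mul_le_mul_of_nonneg_left hb2 hK0
        _ = g k * C := by rw [hgk, hC]; ring
  have claim2 : ∑ k ∈ (Finset.range n).filter (fun k => 2*(k+1) < n), g k ≤ Ttail q (invS n) := by
    have h1 : ∑ k ∈ (Finset.range n).filter (fun k => 2*(k+1) < n), g k ≤ ∑' k, g k :=
      hsumg.sum_le_tsum _ (fun k _ => hgnn k)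
    have hM1 : 1 ≤ invS n := invS_pos hn
    have h2 : ∑' k, g k = Ttail q (invS n) := by
      have h3 := (hsumg.sum_add_tsum_nat_add (invS n - 1)).symm
      have h4 : ∑ i ∈ Finset.range (invS n - 1), g i = 0 := by
        apply Finset.sum_eq_zero
        intro i hi
        rw [Finset.mem_range] at hi
        rw [hg]
        exact if_neg (by omega)
      have h5 : ∀ i : ℕ, g (i + (invS n - 1)) = al q (i + invS n) := by
        intro i
        rw [hg]
        dsimp only
        rw [if_pos (by omega)]
        congr 1
        omega
      rw [h3, h4, zero_add]
      rw [Ttail]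
      exact tsum_congr h5
    rw [← h2]; exact h1
  calc ∑ k ∈ (Finset.range n).filter (fun k => 2*(k+1) < n), al q (k+1) * bc q k (n-(k+1))
      ≤ ∑ k ∈ (Finset.range n).filter (fun k => 2*(k+1) < n), g k * C :=
        Finset.sum_le_sum claim1
    _ = (∑ k ∈ (Finset.range n).filter (fun k => 2*(k+1) < n), g k) * C := by
        rw [Finset.sum_mul]
    _ ≤ Ttail q (invS n) * C := mul_le_mul_of_nonneg_right claim2 hCpos
    _ = K * (2:ℝ)^q * (n:ℝ)^(-q) * Ttail q (invS n) := by rw [hC]; ring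

lemma bigsum {q : ℝ} (hq : 1 < q) {n : ℕ} (hn : 1 ≤ n) :
    ∑ k ∈ (Finset.range n).filter (fun k => ¬ 2*(k+1) < n), al q (k+1) * bc q k (n-(k+1))
      ≤ (2:ℝ)^q * (n:ℝ)^(-q) * ∑' j, b q j := by
  have step1 : ∀ k ∈ (Finset.range n).filter (fun k => ¬ 2*(k+1) < n),
      al q (k+1) * bc q k (n-(k+1)) ≤ (2:ℝ)^q * (n:ℝ)^(-q) * b q (n-(k+1)) := by
    intro k hk
    rw [Finset.mem_filter, Finset.mem_range] at hk
    obtain ⟨hkn, hbig⟩ := hk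
    have h1 : al q (k+1) ≤ (2:ℝ)^q * (n:ℝ)^(-q) := rpow_half_bound hq (by omega) hn (by omega)
    calc al q (k+1) * bc q k (n-(k+1)) ≤ ((2:ℝ)^q * (n:ℝ)^(-q)) * b q (n-(k+1)) := by
          apply mul_le_mul h1 (bc_le_b q _ _) (bc_nonneg q _ _) ?_
          have h2 : (0:ℝ) < (2:ℝ)^q := Real.rpow_pos_of_pos (by norm_num) _
          have h3 : (0:ℝ) ≤ (n:ℝ)^(-q) := Real.rpow_nonneg (Nat.cast_nonneg n) _
          positivity
      _ = (2:ℝ)^q * (n:ℝ)^(-q) * b q (n-(k+1)) := rfl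
  have hCnn : (0:ℝ) ≤ (2:ℝ)^q * (n:ℝ)^(-q) := by
    have h2 : (0:ℝ) < (2:ℝ)^q := Real.rpow_pos_of_pos (by norm_num) _
    have h3 : (0:ℝ) ≤ (n:ℝ)^(-q) := Real.rpow_nonneg (Nat.cast_nonneg n) _
    positivity
  calc ∑ k ∈ (Finset.range n).filter (fun k => ¬ 2*(k+1) < n), al q (k+1) * bc q k (n-(k+1))
      ≤ ∑ k ∈ (Finset.range n).filter (fun k => ¬ 2*(k+1) < n), (2:ℝ)^q * (n:ℝ)^(-q) * b q (n-(k+1)) :=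
        Finset.sum_le_sum step1
    _ ≤ ∑ k ∈ Finset.range n, (2:ℝ)^q * (n:ℝ)^(-q) * b q (n-(k+1)) := by
        apply Finset.sum_le_sum_of_subset_of_nonneg (Finset.filter_subset _ _)
        intro i _ _
        exact mul_nonneg hCnn (b_nonneg q _)
    _ = (2:ℝ)^q * (n:ℝ)^(-q) * ∑ k ∈ Finset.range n, b q (n-1-k) := by
        rw [← Finset.mul_sum]
        congr 1
        refine Finset.sum_congr rfl fun k hk => ?_
        congr 1
        omega
    _ = (2:ℝ)^q * (n:ℝ)^(-q) * ∑ j ∈ Finset.range n, b q j := by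
        rw [Finset.sum_range_reflect]
    _ ≤ (2:ℝ)^q * (n:ℝ)^(-q) * ∑' j, b q j := by
        apply mul_le_mul_of_nonneg_left _ hCnn
        exact (summable_b hq).sum_le_tsum _ (fun j _ => b_nonneg q j)

lemma apriori {q : ℝ} (hq : 1 < q) :
    ∃ K : ℝ, 0 ≤ K ∧ ∀ n : ℕ, 1 ≤ n → b q n ≤ K * (n:ℝ)^(-q) := by
  set W : ℝ := ∑' j, b q j with hW
  have hW0 : 0 ≤ W := tsum_nonneg fun j => b_nonneg q j
  have h2q : (0:ℝ) < (2:ℝ)^q := Real.rpow_pos_of_pos (by norm_num) _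
  -- choose n₀
  have htail : Tendsto (fun n => Ttail q (invS n)) atTop (𝓝 0) :=
    (tendsto_Ttail hq).comp tendsto_invS
  have hev : ∀ᶠ n : ℕ in atTop, Ttail q (invS n) ≤ ((2:ℝ)^q)⁻¹ * 2⁻¹ :=
    htail.eventually_le_const (by positivity)
  obtain ⟨n₀, hn₀⟩ := eventually_atTop.mp hev
  set K : ℝ := 2 * ((2:ℝ)^q * W) + (∑ m ∈ Finset.range n₀, b q m * (m:ℝ)^q) + 1 with hK
  have hbase_nn : 0 ≤ ∑ m ∈ Finset.range n₀, b q m * (m:ℝ)^q :=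
    Finset.sum_nonneg fun m _ => mul_nonneg (b_nonneg q m) (Real.rpow_nonneg (Nat.cast_nonneg m) _)
  have hK0 : 0 ≤ K := by positivity
  refine ⟨K, hK0, ?_⟩
  intro n
  induction n using Nat.strong_induction_on with
  | _ n ih =>
  intro hn
  have hnq_pos : (0:ℝ) < (n:ℝ)^(-q) := Real.rpow_pos_of_pos (by exact_mod_cast hn) _
  rcases lt_or_ge n n₀ with hlt | hge
  · -- base case
    have h1 : b q n * (n:ℝ)^q ≤ ∑ m ∈ Finset.range n₀, b q m * (m:ℝ)^q :=
      Finset.single_le_sum (f := fun m => b q m * (m:ℝ)^q)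
        (fun m _ => mul_nonneg (b_nonneg q m) (Real.rpow_nonneg (Nat.cast_nonneg m) _))
        (Finset.mem_range.mpr hlt)
    have h2 : b q n * (n:ℝ)^q ≤ K := by
      rw [hK]
      have : 0 ≤ 2 * ((2:ℝ)^q * W) := by positivity
      linarith
    calc b q n = (b q n * (n:ℝ)^q) * (n:ℝ)^(-q) := by
          rw [mul_assoc, rpow_mul_rpow_neg hn, mul_one]
      _ ≤ K * (n:ℝ)^(-q) := mul_le_mul_of_nonneg_right h2 hnq_pos.le
  · -- inductive case
    have hsplit := Finset.sum_filter_add_sum_filter_not (Finset.range n)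
      (fun k => 2*(k+1) < n) (fun k => al q (k+1) * bc q k (n-(k+1)))
    have hbs := b_eq_sum q hn
    have hsm := smallsum hq hK0 hn (fun j h1 h2 => ih j h2 h1)
    have hbg := bigsum hq (n := n) hn
    have htl : Ttail q (invS n) ≤ ((2:ℝ)^q)⁻¹ * 2⁻¹ := hn₀ n hge
    have hTnn : 0 ≤ Ttail q (invS n) := Ttail_nonneg _
    have hmain : b q n ≤ K * (2:ℝ)^q * (n:ℝ)^(-q) * Ttail q (invS n)
        + (2:ℝ)^q * (n:ℝ)^(-q) * W := by
      rw [hbs, ← hsplit]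
      exact add_le_add hsm hbg
    have hfirst : K * (2:ℝ)^q * (n:ℝ)^(-q) * Ttail q (invS n) ≤ K * (n:ℝ)^(-q) * 2⁻¹ := by
      calc K * (2:ℝ)^q * (n:ℝ)^(-q) * Ttail q (invS n)
          ≤ K * (2:ℝ)^q * (n:ℝ)^(-q) * (((2:ℝ)^q)⁻¹ * 2⁻¹) := by
            apply mul_le_mul_of_nonneg_left htl (by positivity)
        _ = K * (n:ℝ)^(-q) * 2⁻¹ * ((2:ℝ)^q * ((2:ℝ)^q)⁻¹) := by ring
        _ = K * (n:ℝ)^(-q) * 2⁻¹ := by rw [mul_inv_cancel₀ h2q.ne', mul_one]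
    have hKW : (2:ℝ)^q * W ≤ K * 2⁻¹ := by
      rw [hK]
      linarith
    calc b q n ≤ K * (2:ℝ)^q * (n:ℝ)^(-q) * Ttail q (invS n) + (2:ℝ)^q * (n:ℝ)^(-q) * W := hmain
      _ ≤ K * (n:ℝ)^(-q) * 2⁻¹ + (K * 2⁻¹) * (n:ℝ)^(-q) := by
          apply add_le_add hfirst
          calc (2:ℝ)^q * (n:ℝ)^(-q) * W = ((2:ℝ)^q * W) * (n:ℝ)^(-q) := by ring
            _ ≤ (K * 2⁻¹) * (n:ℝ)^(-q) := mul_le_mul_of_nonneg_right hKW hnq_pos.le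
      _ = K * (n:ℝ)^(-q) := by ring

lemma tendsto_ratio (q : ℝ) (j : ℕ) :
    Tendsto (fun n : ℕ => (n:ℝ)^q * (((n-j : ℕ):ℝ))^(-q)) atTop (𝓝 1) := by
  have hden : Tendsto (fun n : ℕ => (n:ℝ) - j) atTop atTop :=
    tendsto_atTop_add_const_right atTop (-(j:ℝ)) tendsto_natCast_atTop_atTop
  have hinv : Tendsto (fun n : ℕ => (j:ℝ) * ((n:ℝ) - j)⁻¹) atTop (𝓝 0) := by
    have := hden.inv_tendsto_atTop
    simpa using this.const_mul (j:ℝ)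
  have hfrac : Tendsto (fun n : ℕ => (n:ℝ) / ((n:ℝ) - j)) atTop (𝓝 1) := by
    have h1 : Tendsto (fun n : ℕ => 1 + (j:ℝ) * ((n:ℝ) - j)⁻¹) atTop (𝓝 1) := by
      simpa using hinv.const_add 1
    apply h1.congr'
    filter_upwards [eventually_gt_atTop j] with n hn
    have hne : (n:ℝ) - j ≠ 0 := by
      have : (j:ℝ) < n := by exact_mod_cast hn
      linarith
    field_simp
    ring
  have hcont : Tendsto (fun x : ℝ => x ^ q) (𝓝 1) (𝓝 1) := by
    have := (Real.continuousAt_rpow_const 1 q (Or.inl one_ne_zero)).tendsto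
    simpa [Real.one_rpow] using this
  have hcomp := hcont.comp hfrac
  apply hcomp.congr'
  filter_upwards [eventually_gt_atTop j] with n hn
  have hjn : (j:ℝ) < n := by exact_mod_cast hn
  have hnpos : (0:ℝ) < n := lt_of_le_of_lt (Nat.cast_nonneg j) hjn
  have hdpos : (0:ℝ) < (n:ℝ) - j := by linarith
  have hcast : ((n - j : ℕ):ℝ) = (n:ℝ) - j := by
    rw [Nat.cast_sub hn.le]
  show ((n:ℝ) / ((n:ℝ) - j)) ^ q = (n:ℝ)^q * ((n - j : ℕ):ℝ)^(-q)
  rw [hcast, Real.div_rpow hnpos.le hdpos.le, Real.rpow_neg hdpos.le, div_eq_mul_inv]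

lemma tendsto_pow_mul_b {q : ℝ} (hq : 1 < q) :
    Tendsto (fun n : ℕ => (n:ℝ)^q * b q n) atTop (𝓝 (∑' j, b q j)) := by
  obtain ⟨K, hK0, hKb⟩ := apriori hq
  have h2q : (0:ℝ) < (2:ℝ)^q := Real.rpow_pos_of_pos (by norm_num) _
  classical
  set G : ℕ → ℕ → ℝ := fun n j =>
    if j < n ∧ n ≤ 2*(n-j) then (n:ℝ)^q * al q (n-j) * bc q (n-j-1) j else 0 with hG
  have hGnn : ∀ n j, 0 ≤ G n j := by
    intro n j
    rw [hG]
    dsimp only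
    split
    · have ha1 := al_nonneg q (n-j)
      have ha2 := bc_nonneg q (n-j-1) j
      have ha3 : (0:ℝ) ≤ (n:ℝ)^q := Real.rpow_nonneg (Nat.cast_nonneg n) _
      positivity
    · exact le_refl 0
  -- domination
  have hGbd : ∀ n j, ‖G n j‖ ≤ (2:ℝ)^q * b q j := by
    intro n j
    rw [Real.norm_eq_abs, abs_of_nonneg (hGnn n j), hG]
    dsimp only
    split
    · rename_i hcond
      obtain ⟨hjn, hbig⟩ := hcond
      have hn1 : 1 ≤ n := by omega
      have hm1 : 1 ≤ n - j := by omega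
      have hal : al q (n-j) ≤ (2:ℝ)^q * (n:ℝ)^(-q) := rpow_half_bound hq hm1 hn1 hbig
      have hbc : bc q (n-j-1) j ≤ b q j := bc_le_b q _ _
      have hnq : (0:ℝ) < (n:ℝ)^q := Real.rpow_pos_of_pos (by exact_mod_cast hn1) _
      calc (n:ℝ)^q * al q (n-j) * bc q (n-j-1) j
          ≤ (n:ℝ)^q * ((2:ℝ)^q * (n:ℝ)^(-q)) * b q j := by
            apply mul_le_mul _ hbc (bc_nonneg q _ _) _
            · exact mul_le_mul_of_nonneg_left hal hnq.le
            · positivity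
        _ = ((n:ℝ)^q * (n:ℝ)^(-q)) * ((2:ℝ)^q * b q j) := by ring
        _ = (2:ℝ)^q * b q j := by rw [rpow_mul_rpow_neg hn1, one_mul]
    · exact mul_nonneg (Real.rpow_nonneg (by norm_num) q) (b_nonneg q j)
  -- pointwise convergence
  have hGpt : ∀ j, Tendsto (fun n => G n j) atTop (𝓝 (b q j)) := by
    intro j
    have h1 := (tendsto_ratio q j).mul_const (b q j)
    rw [one_mul] at h1
    apply h1.congr'
    filter_upwards [eventually_ge_atTop (2*j+2)] with n hn
    have hcond : j < n ∧ n ≤ 2*(n-j) := by omega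
    have hstab : bc q (n-j-1) j = b q j := bc_stab q (by omega)
    rw [hG]
    dsimp only
    rw [if_pos hcond, hstab]
    show (n:ℝ)^q * ((n-j:ℕ):ℝ)^(-q) * b q j = (n:ℝ)^q * al q (n-j) * b q j
    rfl
  have htan := tendsto_tsum_of_dominated_convergence (𝓕 := atTop)
    (f := G) (g := b q) (bound := fun j => (2:ℝ)^q * b q j)
    ((summable_b hq).mul_left _) hGpt (Filter.Eventually.of_forall fun n j => hGbd n j)
  -- part 2 tends to zero
  have hpart2 : Tendsto (fun n : ℕ => ∑ k ∈ (Finset.range n).filter (fun k => 2*(k+1) < n),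
      (n:ℝ)^q * (al q (k+1) * bc q k (n-(k+1)))) atTop (𝓝 0) := by
    apply squeeze_zero_norm' (a := fun n => K * (2:ℝ)^q * Ttail q (invS n))
    · filter_upwards [eventually_ge_atTop 1] with n hn
      have hnq : (0:ℝ) < (n:ℝ)^q := Real.rpow_pos_of_pos (by exact_mod_cast hn) _
      have hnn : 0 ≤ ∑ k ∈ (Finset.range n).filter (fun k => 2*(k+1) < n),
          (n:ℝ)^q * (al q (k+1) * bc q k (n-(k+1))) := by
        apply Finset.sum_nonneg
        intro k _
        have hb1 := al_nonneg q (k+1)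
        have hb2 := bc_nonneg q k (n-(k+1))
        have hb3 : (0:ℝ) ≤ (n:ℝ)^q := Real.rpow_nonneg (Nat.cast_nonneg n) _
        positivity
      rw [Real.norm_eq_abs, abs_of_nonneg hnn]
      have hsm := smallsum hq hK0 hn (fun i h1 h2 => hKb i h1)
      calc ∑ k ∈ (Finset.range n).filter (fun k => 2*(k+1) < n),
            (n:ℝ)^q * (al q (k+1) * bc q k (n-(k+1)))
          = (n:ℝ)^q * ∑ k ∈ (Finset.range n).filter (fun k => 2*(k+1) < n),
            (al q (k+1) * bc q k (n-(k+1))) := by rw [Finset.mul_sum]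
        _ ≤ (n:ℝ)^q * (K * (2:ℝ)^q * (n:ℝ)^(-q) * Ttail q (invS n)) :=
            mul_le_mul_of_nonneg_left hsm hnq.le
        _ = ((n:ℝ)^q * (n:ℝ)^(-q)) * (K * (2:ℝ)^q * Ttail q (invS n)) := by ring
        _ = K * (2:ℝ)^q * Ttail q (invS n) := by rw [rpow_mul_rpow_neg hn, one_mul]
    · have := ((tendsto_Ttail hq).comp tendsto_invS).const_mul (K * (2:ℝ)^q)
      simpa using this
  -- combine
  have hcomb := hpart2.add htan
  rw [zero_add] at hcomb
  apply hcomb.congr'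
  filter_upwards [eventually_ge_atTop 1] with n hn
  -- show part2 + ∑' G = n^q b n
  have hA : ∑' j, G n j = ∑ k ∈ (Finset.range n).filter (fun k => ¬ 2*(k+1) < n),
      (n:ℝ)^q * (al q (k+1) * bc q k (n-(k+1))) := by
    have h1 : ∑' j, G n j = ∑ j ∈ Finset.range n, G n j := by
      apply tsum_eq_sum
      intro j hj
      rw [Finset.mem_range] at hj
      rw [hG]
      exact if_neg (by omega)
    have h2 : ∑ j ∈ Finset.range n, G n j = ∑ k ∈ Finset.range n, G n (n-1-k) :=
      (Finset.sum_range_reflect (fun j => G n j) n).symm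
    have h3 : ∀ k ∈ Finset.range n, G n (n-1-k) =
        (if ¬ 2*(k+1) < n then (n:ℝ)^q * (al q (k+1) * bc q k (n-(k+1))) else 0) := by
      intro k hk
      rw [Finset.mem_range] at hk
      rw [hG]
      dsimp only
      have he1 : n - (n-1-k) = k+1 := by omega
      have he3 : n-1-k = n-(k+1) := by omega
      rw [he1, Nat.add_sub_cancel, he3]
      refine if_congr ?_ (by ring) rfl
      constructor
      · rintro ⟨_, h⟩; omega
      · intro h; omega
    rw [h1, h2, Finset.sum_congr rfl h3, ← Finset.sum_filter]
  show _ + ∑' j, G n j = (n:ℝ)^q * b q n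
  rw [hA, Finset.sum_filter_add_sum_filter_not (Finset.range n) (fun k => 2*(k+1) < n)
    (fun k => (n:ℝ)^q * (al q (k+1) * bc q k (n-(k+1)))), ← Finset.mul_sum, ← b_eq_sum q hn]


end Stmt7

open Stmt7 Filter Topology in
theorem stmt_7 (q : ℝ) (hq : 1 < q) (c : ℕ → ℝ)
    (hc : ∀ z : ℂ, ‖z‖ < 1 →
      HasSum (fun n : ℕ => (c n : ℂ) * z ^ n)
        (∏' k : ℕ, (1 + ((k : ℂ) + 1) ^ (-(q : ℂ)) * z ^ (k + 1)))) :
    Asymptotics.IsEquivalent Filter.atTop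
      (fun n : ℕ => c n)
      (fun n : ℕ => (∏' k : ℕ, (1 + ((k : ℝ) + 1) ^ (-q))) * (n : ℝ) ^ (-q)) := by
  -- identify the complex factors
  have hfacC : ∀ (z : ℂ) (k : ℕ),
      (1 + ((k : ℂ) + 1) ^ (-(q : ℂ)) * z ^ (k + 1)) = (1 + (al q (k+1) : ℂ) * z ^ (k+1)) := by
    intro z k
    congr 2
    have h1 : ((al q (k+1) : ℝ) : ℂ) = ((((k+1:ℕ):ℝ)):ℂ) ^ ((-q : ℝ) : ℂ) :=
      Complex.ofReal_cpow (Nat.cast_nonneg _) (-q)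
    rw [h1]
    push_cast
    rfl
  -- c n = b q n
  have hcb : ∀ n, c n = b q n := by
    have he : ∀ z : ℂ, ‖z‖ < 1 →
        HasSum (fun n : ℕ => ((c n : ℂ) - (b q n : ℂ)) * z ^ n) 0 := by
      intro z hz
      have h1 := hc z hz
      have h2 := hasSum_tprod_complex hq hz
      have h3 : (∏' k : ℕ, (1 + ((k : ℂ) + 1) ^ (-(q : ℂ)) * z ^ (k + 1)))
          = (∏' k : ℕ, (1 + (al q (k+1) : ℂ) * z ^ (k+1))) :=
        tprod_congr fun k => hfacC z k
      rw [h3] at h1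
      have h4 := h1.sub h2
      rw [sub_self] at h4
      exact h4.congr_fun fun n => by ring
    intro n
    have := coeff_unique he n
    have h5 : (c n : ℂ) = (b q n : ℂ) := by linear_combination this
    exact_mod_cast h5
  -- identify the real product
  have hWr : (∏' k : ℕ, (1 + ((k : ℝ) + 1) ^ (-q))) = ∑' n, b q n := by
    rw [← tprod_real_eq hq]
    refine tprod_congr fun k => ?_
    have h : al q (k+1) = ((k:ℝ)+1)^(-q) := by
      show ((k+1:ℕ):ℝ)^(-q) = ((k:ℝ)+1)^(-q)
      norm_num
    rw [h]
  set W : ℝ := ∑' n, b q n with hWdef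
  have hW1 : 1 ≤ W := by
    have := Summable.le_tsum (summable_b hq) 0 (fun i _ => b_nonneg q i)
    rwa [b_zero] at this
  have hW0 : 0 < W := by linarith
  rw [hWr]
  rw [Asymptotics.isEquivalent_iff_tendsto_one ?hne]
  case hne =>
    filter_upwards [eventually_ge_atTop 1] with n hn
    have h1 : (0:ℝ) < (n:ℝ)^(-q) := Real.rpow_pos_of_pos (by exact_mod_cast hn) _
    positivity
  have hlim := (tendsto_pow_mul_b hq).div_const W
  rw [← hWdef, div_self hW0.ne'] at hlim
  apply hlim.congr'
  filter_upwards [eventually_ge_atTop 1] with n hn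
  have h1 : (0:ℝ) < (n:ℝ)^(-q) := Real.rpow_pos_of_pos (by exact_mod_cast hn) _
  have h2 := rpow_mul_rpow_neg (q := q) hn
  show ((n:ℝ)^q * b q n) / W = c n / (W * (n:ℝ)^(-q))
  rw [hcb n, div_eq_div_iff hW0.ne' (by positivity)]
  linear_combination (b q n) * W * h2
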